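/- arXiv:1509.02485 — 2 statements merged into one kernel-verified Lean document; each statement's English description precedes it below -/
import Mathlib

section
/- Let G = (V,E) be a finite simple graph and ≺ a linear order on V. A 0/1 vector x indexed by the arcs of G (ordered non-edges) is the representative vector of some proper coloring of G if and only if the set of arcs {a : x_a = 1} is an independent (stable) set of the Cornaz–Jost graph R≺(G). -/
open scoped Classical

/-- `(u, v)` is an arc of `G` w.r.t. the order `lt`: `u ≺ v` and `uv ∉ E`. -/
abbrev IsArcPair {V : Type*} (G : SimpleGraph V) (lt : V → V → Prop) (p : V × V) : Prop :=
  lt p.1 p.2 ∧ ¬ G.Adj p.1 p.2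

/-- The set of arcs of `G` (ordered non-edges), as a type. -/
abbrev Arc {V : Type*} (G : SimpleGraph V) (lt : V → V → Prop) : Type _ :=
  {p : V × V // IsArcPair G lt p}

/-- A proper coloring of a graph, as a color function. -/
def ProperColoring {W : Type*} (H : SimpleGraph W) (c : W → ℕ) : Prop :=
  ∀ u v, H.Adj u v → c u ≠ c v

/-- `u` is the `lt`-least element of its color class under `c`. -/
def IsClassRep {V : Type*} (lt : V → V → Prop) (c : V → ℕ) (u : V) : Prop :=
  ∀ w, c w = c u → u = w ∨ lt u w

/-- The representative vector of a coloring `c`: `x (u,v) = 1` iff `u` and `v` have the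
same color and `u` is the `lt`-least element of that color class. -/
noncomputable def repVec {V : Type*} (G : SimpleGraph V) (lt : V → V → Prop) (c : V → ℕ) :
    Arc G lt → ℝ := fun a =>
  if c a.1.1 = c a.1.2 ∧ IsClassRep lt c a.1.1 then 1 else 0

/-- The coloring polytope: convex hull of representative vectors of proper colorings. -/
noncomputable def COL {V : Type*} (G : SimpleGraph V) (lt : V → V → Prop) :
    Set (Arc G lt → ℝ) :=
  convexHull ℝ {x | ∃ c : V → ℕ, ProperColoring G c ∧ x = repVec G lt c}

/-- A stable (independent) set of a graph. -/
def IsStableSet {W : Type*} (H : SimpleGraph W) (s : Set W) : Prop :=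
  ∀ a ∈ s, ∀ b ∈ s, ¬ H.Adj a b

/-- The stable set polytope of a graph. -/
noncomputable def STAB {W : Type*} (H : SimpleGraph W) : Set (W → ℝ) :=
  convexHull ℝ {x | ∃ s : Set W, IsStableSet H s ∧ x = s.indicator 1}

/-- The Cornaz–Jost graph `R≺(G)`: vertices are the arcs of `G`; two distinct arcs
`(a,b)` and `(c,d)` are adjacent iff they share an endpoint and it is not the case that
`a = c` and `bd ∉ E`. -/
def RGraph {V : Type*} (G : SimpleGraph V) (lt : V → V → Prop) : SimpleGraph (Arc G lt) where
  Adj p q := p ≠ q ∧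
    (p.1.1 = q.1.1 ∨ p.1.1 = q.1.2 ∨ p.1.2 = q.1.1 ∨ p.1.2 = q.1.2) ∧
    ¬ (p.1.1 = q.1.1 ∧ ¬ G.Adj p.1.2 q.1.2)
  symm := ⟨by
    rintro p q ⟨h1, h2, h3⟩
    refine ⟨h1.symm, ?_, fun hc => h3 ⟨hc.1.symm, fun h => hc.2 h.symm⟩⟩
    rcases h2 with h | h | h | h
    · exact Or.inl h.symm
    · exact Or.inr (Or.inr (Or.inl h.symm))
    · exact Or.inr (Or.inl h.symm)
    · exact Or.inr (Or.inr (Or.inr h.symm))⟩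
  loopless := ⟨fun p h => h.1 rfl⟩

/-- The line graph of the complement of `G`, with the edges of the complement
identified with the arcs of `G`: two distinct arcs are adjacent iff they share an endpoint. -/
def lineGraphArc {V : Type*} (G : SimpleGraph V) (lt : V → V → Prop) :
    SimpleGraph (Arc G lt) where
  Adj p q := p ≠ q ∧
    (p.1.1 = q.1.1 ∨ p.1.1 = q.1.2 ∨ p.1.2 = q.1.1 ∨ p.1.2 = q.1.2)
  symm := ⟨by
    rintro p q ⟨h1, h2⟩
    refine ⟨h1.symm, ?_⟩
    rcases h2 with h | h | h | h
    · exact Or.inl h.symm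
    · exact Or.inr (Or.inr (Or.inl h.symm))
    · exact Or.inr (Or.inl h.symm)
    · exact Or.inr (Or.inr (Or.inr h.symm))⟩
  loopless := ⟨fun p h => h.1 rfl⟩

/-- The independence number of `H` is at most 2. -/
def AlphaLeTwo {W : Type*} (H : SimpleGraph W) : Prop :=
  ∀ s : Set W, IsStableSet H s → s.ncard ≤ 2

/-- The chromatic number of a graph, as a natural number. -/
noncomputable def chromNum {W : Type*} (H : SimpleGraph W) : ℕ :=
  sInf {n : ℕ | ∃ c : W → ℕ, ProperColoring H c ∧ ∀ v, c v < n}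

/-- `H` contains a copy of `F` as a (not necessarily induced) subgraph. -/
def ContainsCopy {α β : Type*} (F : SimpleGraph α) (H : SimpleGraph β) : Prop :=
  ∃ f : α → β, Function.Injective f ∧ ∀ a b, F.Adj a b → H.Adj (f a) (f b)

/-- `H` contains an induced copy of `F`. -/
def ContainsInducedCopy {α β : Type*} (F : SimpleGraph α) (H : SimpleGraph β) : Prop :=
  ∃ f : α → β, Function.Injective f ∧ ∀ a b, H.Adj (f a) (f b) ↔ F.Adj a b

/-- The paw: a triangle `{0,1,2}` plus the vertex `3` adjacent only to `2`. -/
def pawGraph : SimpleGraph (Fin 4) :=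
  SimpleGraph.fromEdgeSet {s(0, 1), s(0, 2), s(1, 2), s(2, 3)}

/-- The kite: the paw plus the vertex `4` adjacent only to `3` (the paw's degree-1 vertex). -/
def kiteGraph : SimpleGraph (Fin 5) :=
  SimpleGraph.fromEdgeSet {s(0, 1), s(0, 2), s(1, 2), s(2, 3), s(3, 4)}

/-- The claw `K_{1,3}`: vertex `0` adjacent to `1`, `2`, `3`. -/
def clawGraph : SimpleGraph (Fin 4) :=
  SimpleGraph.fromEdgeSet {s(0, 1), s(0, 2), s(0, 3)}

/-- A graph is claw-free if it has no induced copy of `K_{1,3}`. -/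
def ClawFree {W : Type*} (H : SimpleGraph W) : Prop :=
  ¬ ContainsInducedCopy clawGraph H

/-- A graph is quasi-line if the neighborhood of every vertex can be partitioned
into two cliques. -/
def QuasiLine {W : Type*} (H : SimpleGraph W) : Prop :=
  ∀ v : W, ∃ K₁ K₂ : Set W, Disjoint K₁ K₂ ∧ K₁ ∪ K₂ = {w | H.Adj v w} ∧
    H.IsClique K₁ ∧ H.IsClique K₂

/-- A graph is hypomatchable if deleting any vertex leaves a graph with a perfect matching. -/
def Hypomatchable {W : Type*} (H : SimpleGraph W) : Prop :=
  ∀ u : W, ∃ M : (H.induce {v | v ≠ u}).Subgraph, M.IsPerfectMatching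

/-- A graph is 2-connected: connected, at least 3 vertices, and deleting any vertex
leaves it connected. -/
def TwoConnected {W : Type*} [Fintype W] (H : SimpleGraph W) : Prop :=
  H.Connected ∧ 3 ≤ Fintype.card W ∧ ∀ u : W, (H.induce {v | v ≠ u}).Connected

/-- A set of arcs is a matching of the complement of `G`: no two distinct arcs share
an endpoint. -/
def IsMatchingArcSet {V : Type*} (G : SimpleGraph V) (lt : V → V → Prop)
    (m : Set (Arc G lt)) : Prop :=
  ∀ p ∈ m, ∀ q ∈ m, p ≠ q →
    ¬ (p.1.1 = q.1.1 ∨ p.1.1 = q.1.2 ∨ p.1.2 = q.1.1 ∨ p.1.2 = q.1.2)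

/-- The matching polytope of the complement of `G`, viewed in `ℝ^A` via the
identification of edges of the complement with arcs. -/
noncomputable def MATCHarcs {V : Type*} (G : SimpleGraph V) (lt : V → V → Prop) :
    Set (Arc G lt → ℝ) :=
  convexHull ℝ {x | ∃ m : Set (Arc G lt), IsMatchingArcSet G lt m ∧ x = m.indicator 1}

/-- Restriction of a vector indexed by arcs of `G` to the arcs of an induced subgraph. -/
def restrictVec {V : Type*} (G : SimpleGraph V) (lt : V → V → Prop) (W : Set V)
    (x : Arc G lt → ℝ) : Arc (G.induce W) (fun a b => lt ↑a ↑b) → ℝ :=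
  fun a => x ⟨(↑a.1.1, ↑a.1.2), a.2.1, a.2.2⟩

/-- A 0/1 vector indexed by arcs is the representative vector of a proper
coloring of `G` iff its support is a stable set of the Cornaz–Jost graph `R≺(G)`. -/
theorem statement0 {V : Type*} [Fintype V] [DecidableEq V]
    (G : SimpleGraph V) [DecidableRel G.Adj]
    (lt : V → V → Prop) [DecidableRel lt] (hlt : IsStrictTotalOrder V lt)
    (x : Arc G lt → ℝ) (hx : ∀ a, x a = 0 ∨ x a = 1) :
    (∃ c : V → ℕ, ProperColoring G c ∧ x = repVec G lt c) ↔
      IsStableSet (RGraph G lt) {a | x a = 1} := by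
  have asym : ∀ {u v : V}, lt u v → lt v u → False := by
    intro u v h1 h2; exact hlt.irrefl u (hlt.trans _ _ _ h1 h2)
  constructor
  · rintro ⟨c, hc, rfl⟩
    intro a ha b hb hadj
    obtain ⟨hne, hshare, hnot⟩ := hadj
    rw [Set.mem_setOf_eq, repVec] at ha hb
    split_ifs at ha with h1
    swap; · norm_num at ha
    split_ifs at hb with h2
    swap; · norm_num at hb
    obtain ⟨hc1, hr1⟩ := h1
    obtain ⟨hc2, hr2⟩ := h2
    rcases hshare with h | h | h | h
    · -- a.1.1 = b.1.1
      apply hnot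
      refine ⟨h, fun hadj2 => ?_⟩
      exact hc _ _ hadj2 (by rw [← hc1, ← hc2, h])
    · -- a.1.1 = b.1.2
      have hcab : c b.1.1 = c a.1.1 := by rw [hc2, h]
      have hltba : lt b.1.1 a.1.1 := h ▸ b.2.1
      rcases hr1 b.1.1 hcab with h' | h'
      · exact absurd (h' ▸ hltba) (hlt.irrefl _)
      · exact asym h' hltba
    · -- a.1.2 = b.1.1
      have hcab : c b.1.1 = c a.1.1 := by rw [← h, ← hc1]
      have hltab : lt a.1.1 b.1.1 := h ▸ a.2.1
      rcases hr2 a.1.1 (by rw [hcab]) with h' | h'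
      · exact absurd (h' ▸ hltab) (hlt.irrefl _)
      · exact asym hltab h'
    · -- a.1.2 = b.1.2
      have hcab : c b.1.1 = c a.1.1 := by rw [hc2, ← h, ← hc1]
      have h11 : a.1.1 = b.1.1 := by
        rcases hr1 b.1.1 hcab with h' | h'
        · exact h'
        · rcases hr2 a.1.1 (by rw [hcab]) with h'' | h''
          · exact h''.symm
          · exact absurd h' (fun hh => asym hh h'')
      exact hne (Subtype.ext (Prod.ext h11 h))
  · intro hS
    set S : Set (Arc G lt) := {a | x a = 1} with hSdef
    have key : ∀ a ∈ S, ∀ b ∈ S,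
        (a.1.1 = b.1.1 ∨ a.1.1 = b.1.2 ∨ a.1.2 = b.1.1 ∨ a.1.2 = b.1.2) →
        a.1.1 = b.1.1 ∧ ¬ G.Adj a.1.2 b.1.2 := by
      intro a ha b hb hsh
      by_cases hab : a = b
      · subst hab; exact ⟨rfl, G.loopless.irrefl _⟩
      · by_contra hcon
        exact hS a ha b hb ⟨hab, hsh, hcon⟩
    have secondNeFirst : ∀ a ∈ S, ∀ b ∈ S, a.1.2 ≠ b.1.1 := by
      intro a ha b hb h
      have h11 := (key a ha b hb (Or.inr (Or.inr (Or.inl h)))).1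
      have h12 : a.1.2 = a.1.1 := h.trans h11.symm
      have := a.2.1
      rw [h12] at this
      exact hlt.irrefl _ this
    have secondUniq : ∀ a ∈ S, ∀ b ∈ S, a.1.2 = b.1.2 → a = b := by
      intro a ha b hb h
      have := (key a ha b hb (Or.inr (Or.inr (Or.inr h)))).1
      exact Subtype.ext (Prod.ext this h)
    classical
    set rep : V → V := fun v =>
      if h : ∃ a, a ∈ S ∧ a.1.2 = v then h.choose.1.1 else v with hrep
    have rep_cases : ∀ v : V,
        (rep v = v ∧ ∀ a ∈ S, a.1.2 ≠ v) ∨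
        ∃ a ∈ S, a.1.1 = rep v ∧ a.1.2 = v := by
      intro v
      by_cases h : ∃ a, a ∈ S ∧ a.1.2 = v
      · right
        refine ⟨h.choose, h.choose_spec.1, ?_, h.choose_spec.2⟩
        simp only [hrep, dif_pos h]
      · left
        refine ⟨by simp only [hrep, dif_neg h], fun a ha hv => h ⟨a, ha, hv⟩⟩
    have rep_spec : ∀ a ∈ S, rep a.1.2 = a.1.1 := by
      intro a ha
      rcases rep_cases a.1.2 with ⟨h1, h2⟩ | ⟨b, hb, hb1, hb2⟩
      · exact absurd rfl (h2 a ha)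
      · rw [← hb1, secondUniq b hb a ha hb2]
    have rep_first : ∀ a ∈ S, rep a.1.1 = a.1.1 := by
      intro a ha
      rcases rep_cases a.1.1 with ⟨h1, _⟩ | ⟨b, hb, hb1, hb2⟩
      · exact h1
      · exact absurd hb2 (secondNeFirst b hb a ha)
    set e : V ≃ Fin (Fintype.card V) := Fintype.equivFin V with he
    set c : V → ℕ := fun v => (e (rep v) : ℕ) with hcdef
    have ceq : ∀ {u v : V}, c u = c v ↔ rep u = rep v := by
      intro u v
      constructor
      · intro h; exact e.injective (Fin.val_injective h)
      · intro h; simp only [hcdef, h]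
    refine ⟨c, ?_, ?_⟩
    · intro w1 w2 hadj hcc
      rw [ceq] at hcc
      rcases rep_cases w1 with ⟨h1, _⟩ | ⟨a, ha, ha1, ha2⟩ <;>
        rcases rep_cases w2 with ⟨h2, _⟩ | ⟨b, hb, hb1, hb2⟩
      · exact G.loopless.irrefl w1 (by rw [← h1, hcc, h2] at hadj ⊢; exact hadj)
      · -- rep w1 = w1, b : (rep w2, w2) ∈ S
        have : b.1.1 = w1 := by rw [hb1, ← hcc, h1]
        exact b.2.2 (by rw [this, hb2]; exact hadj)
      · have : a.1.1 = w2 := by rw [ha1, hcc, h2]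
        exact a.2.2 (by rw [this, ha2]; exact hadj.symm)
      · have h11 : a.1.1 = b.1.1 := by rw [ha1, hb1, hcc]
        have := (key a ha b hb (Or.inl h11)).2
        rw [ha2, hb2] at this
        exact this hadj
    · funext a
      rcases hx a with h0 | h1
      · rw [h0, repVec]
        rw [if_neg]
        rintro ⟨hcc, hrepc⟩
        have haS : a ∉ S := by simp only [hSdef, Set.mem_setOf_eq, h0]; norm_num
        rw [ceq] at hcc
        rcases rep_cases a.1.2 with ⟨h2, _⟩ | ⟨b, hb, hb1, hb2⟩
        · -- rep a.1.2 = a.1.2, so rep a.1.1 = a.1.2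
          rcases rep_cases a.1.1 with ⟨h1, _⟩ | ⟨d, hd, hd1, hd2⟩
          · have hv : a.1.1 = a.1.2 := by rw [← h1, hcc, h2]
            have := a.2.1
            rw [hv] at this
            exact hlt.irrefl _ this
          · have : d.1.1 = a.1.2 := by rw [hd1, hcc, h2]
            exact asym a.2.1 (by rw [← this, ← hd2]; exact d.2.1)
        · -- b ∈ S with b.1 = (rep a.1.2, a.1.2)
          by_cases hw : b.1.1 = a.1.1
          · exact haS (by
              have : b = a := Subtype.ext (Prod.ext hw hb2)
              rw [← this]; exact hb)
          · have hcw : c b.1.1 = c a.1.1 := by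
              rw [ceq, rep_first b hb, hb1, hcc]
            rcases hrepc b.1.1 hcw with h' | h'
            · exact hw h'.symm
            · -- lt a.1.1 b.1.1; need lt b.1.1 a.1.1
              rcases rep_cases a.1.1 with ⟨h1, _⟩ | ⟨d, hd, hd1, hd2⟩
              · exact hw (by rw [hb1, ← hcc, h1])
              · have : d.1.1 = b.1.1 := by rw [hd1, hcc, ← hb1]
                exact asym h' (by rw [← this, ← hd2]; exact d.2.1)
      · have haS : a ∈ S := h1
        rw [h1, repVec, if_pos]
        constructor
        · rw [ceq, rep_first a haS, rep_spec a haS]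
        · intro w hcw
          rw [ceq, rep_first a haS] at hcw
          rcases rep_cases w with ⟨h2, _⟩ | ⟨b, hb, hb1, hb2⟩
          · left; rw [← hcw, h2]
          · right
            have : b.1.1 = a.1.1 := by rw [hb1, hcw]
            rw [← this, ← hb2]; exact b.2.1
end

section
/- Let G = (V,E) be a finite simple graph. Then the Cornaz–Jost graph R≺(G) is a quasi-line graph for every linear order ≺ on V if and only if the complement of G does not contain a kite as a subgraph. -/
open scoped Classical

/-! ### Auxiliary machinery for statement17 -/

lemma kite_of_config {V : Type*} {G : SimpleGraph V} (v0 v1 v2 v3 v4 : V)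
    (h01 : Gᶜ.Adj v0 v1) (h02 : Gᶜ.Adj v0 v2) (h12 : Gᶜ.Adj v1 v2)
    (h23 : Gᶜ.Adj v2 v3) (h34 : Gᶜ.Adj v3 v4)
    (d03 : v0 ≠ v3) (d04 : v0 ≠ v4) (d13 : v1 ≠ v3) (d14 : v1 ≠ v4) (d24 : v2 ≠ v4) :
    ContainsCopy kiteGraph Gᶜ := by
  have h10 := h01.symm; have h20 := h02.symm; have h21 := h12.symm
  have h32 := h23.symm; have h43 := h34.symm
  refine ⟨![v0, v1, v2, v3, v4], ?_, ?_⟩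
  · have d01 := h01.ne; have d02 := h02.ne; have d12 := h12.ne; have d23 := h23.ne
    have d34 := h34.ne
    intro i j hij
    fin_cases i <;> fin_cases j <;> simp_all
  · intro a b hab
    fin_cases a <;> fin_cases b <;>
      simp only [kiteGraph, SimpleGraph.fromEdgeSet_adj] at hab <;>
      first
        | (exact absurd hab (by decide))
        | simp_all

/-- `y` is the inner vertex of a path of length 2 in `R` (a "leaf of a big star"). -/
def BigS {α : Type*} (R : α → α → Prop) (y : α) : Prop := ∃ z w, R y z ∧ R z w ∧ w ≠ y

/-- `y` is the top endpoint of an isolated `R`-edge. -/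
def IsoTop {α : Type*} (R : α → α → Prop) (lt : α → α → Prop) (y : α) : Prop :=
  ∃ z, R y z ∧ lt z y ∧ (∀ w, R z w → w = y) ∧ (∀ w, R y w → w = z)

/-- One side of an explicit 2-coloring of a triangle-free, `P₄`-free graph. -/
def S1 {α : Type*} (R : α → α → Prop) (lt : α → α → Prop) (y : α) : Prop :=
  BigS R y ∨ IsoTop R lt y

lemma s1_edge {α : Type*} {R lt : α → α → Prop} {y : α} (h : S1 R lt y) : ∃ z, R y z := by
  rcases h with ⟨z, w, h1, _⟩ | ⟨z, h1, _⟩ <;> exact ⟨z, h1⟩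

lemma big_iso {α : Type*} {R lt : α → α → Prop} (hsymm : ∀ {x y}, R x y → R y x)
    {y y' : α} (h : R y y') (h1 : BigS R y) (h2 : IsoTop R lt y') : False := by
  obtain ⟨z', hz', hlt', hu1, hu2⟩ := h2
  have hy : y = z' := hu2 y (hsymm h)
  subst hy
  obtain ⟨z, w, ha, hb, hw⟩ := h1
  have hz : z = y' := hu1 z ha
  subst hz
  exact hw (hu2 w hb)

lemma big_big {α : Type*} {R : α → α → Prop} (hsymm : ∀ {x y}, R x y → R y x)
    (hT : ∀ x y z, R x y → R y z → R x z → False)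
    (hP : ∀ y1 y2 y3 y4, R y1 y2 → R y2 y3 → R y3 y4 → y1 ≠ y3 → y1 ≠ y4 → y2 ≠ y4 → False)
    {y y' : α} (h : R y y') (h1 : BigS R y) (h2 : BigS R y') : False := by
  obtain ⟨z, w, ha, hb, hw⟩ := h1
  by_cases hzy : z = y'
  · have hb1 : R y' w := hzy ▸ hb
    obtain ⟨z', w', ha', hb', hw'⟩ := h2
    by_cases hzy' : z' = y
    · have hb1' : R y w' := hzy' ▸ hb'
      by_cases hww : w = w'
      · exact hT y y' w h hb1 (show R y w by rw [hww]; exact hb1')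
      · exact hP w y' y w' (hsymm hb1) (hsymm h) hb1' hw hww (Ne.symm hw')
    · by_cases hyw' : y = w'
      · exact hT y y' z' h ha' (hsymm (show R z' y by rw [hyw']; exact hb'))
      · exact hP y y' z' w' h ha' hb' (Ne.symm hzy') hyw' (Ne.symm hw')
  · by_cases hyw : y' = w
    · exact hT y z y' ha (show R z y' by rw [hyw]; exact hb) h
    · exact hP y' y z w (hsymm h) ha hb (fun e => hzy e.symm) hyw (Ne.symm hw)

lemma two_color_S1 {α : Type*} {R lt : α → α → Prop} (hsymm : ∀ {x y}, R x y → R y x)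
    (hT : ∀ x y z, R x y → R y z → R x z → False)
    (hP : ∀ y1 y2 y3 y4, R y1 y2 → R y2 y3 → R y3 y4 → y1 ≠ y3 → y1 ≠ y4 → y2 ≠ y4 → False)
    (hasymm : ∀ {x y}, lt x y → lt y x → False)
    {y y' : α} (h : R y y') (h1 : S1 R lt y) (h2 : S1 R lt y') : False := by
  rcases h1 with h1 | h1 <;> rcases h2 with h2 | h2
  · exact big_big hsymm hT hP h h1 h2
  · exact @big_iso α R lt @hsymm y y' h h1 h2
  · exact @big_iso α R lt @hsymm y' y (hsymm h) h2 h1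
  · obtain ⟨z, ha, hlt, hu1, hu2⟩ := h1
    obtain ⟨z', ha', hlt', hu1', hu2'⟩ := h2
    have e1 : y' = z := hu2 y' h
    have e2 : y = z' := hu2' y (hsymm h)
    exact hasymm (e1 ▸ hlt) (e2 ▸ hlt')

lemma two_color_S0 {α : Type*} {R lt : α → α → Prop} (hsymm : ∀ {x y}, R x y → R y x)
    (hIrr : ∀ y, ¬ R y y)
    (htri : ∀ x y : α, lt x y ∨ x = y ∨ lt y x)
    {y y' : α} (h : R y y') (h1 : ¬ S1 R lt y) (h2 : ¬ S1 R lt y') : False := by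
  have hu1 : ∀ w, R y' w → w = y := by
    intro w hw
    by_contra hne
    exact h1 (Or.inl ⟨y', w, h, hw, hne⟩)
  have hu2 : ∀ w, R y w → w = y' := by
    intro w hw
    by_contra hne
    exact h2 (Or.inl ⟨y, w, hsymm h, hw, hne⟩)
  rcases htri y y' with hl | he | hl
  · exact h2 (Or.inr ⟨y, hsymm h, hl, hu2, hu1⟩)
  · exact hIrr y (he ▸ h)
  · exact h1 (Or.inr ⟨y', h, hl, hu1, hu2⟩)

/-- `R≺(G)` is a quasi-line graph for every linear order `≺` iff the
complement of `G` contains no kite as a subgraph. -/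
theorem statement17 {V : Type*} [Fintype V] [DecidableEq V]
    (G : SimpleGraph V) [DecidableRel G.Adj] :
    (∀ lt : V → V → Prop, IsStrictTotalOrder V lt → QuasiLine (RGraph G lt)) ↔
      ¬ ContainsCopy kiteGraph Gᶜ := by
  constructor
  · -- quasi-line for all orders → no kite in the complement
    intro hql hkite
    obtain ⟨f, hfinj, hfe⟩ := hkite
    have hadj : ∀ i j : Fin 5, kiteGraph.Adj i j → Gᶜ.Adj (f i) (f j) := hfe
    have e01 : Gᶜ.Adj (f 0) (f 1) := hadj 0 1 (by
      rw [kiteGraph, SimpleGraph.fromEdgeSet_adj]; exact ⟨by simp, by decide⟩)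
    have e02 : Gᶜ.Adj (f 0) (f 2) := hadj 0 2 (by
      rw [kiteGraph, SimpleGraph.fromEdgeSet_adj]; exact ⟨by simp, by decide⟩)
    have e12 : Gᶜ.Adj (f 1) (f 2) := hadj 1 2 (by
      rw [kiteGraph, SimpleGraph.fromEdgeSet_adj]; exact ⟨by simp, by decide⟩)
    have e23 : Gᶜ.Adj (f 2) (f 3) := hadj 2 3 (by
      rw [kiteGraph, SimpleGraph.fromEdgeSet_adj]; exact ⟨by simp, by decide⟩)
    have e34 : Gᶜ.Adj (f 3) (f 4) := hadj 3 4 (by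
      rw [kiteGraph, SimpleGraph.fromEdgeSet_adj]; exact ⟨by simp, by decide⟩)
    have dd : ∀ i j : Fin 5, i ≠ j → f i ≠ f j := fun i j hij h => hij (hfinj h)
    -- the order: f 4 ≺ f 3 ≺ f 2 ≺ f 0 ≺ f 1 ≺ everything else
    set r : V → ℕ := fun v =>
      if v = f 4 then 0 else if v = f 3 then 1 else if v = f 2 then 2 else
      if v = f 0 then 3 else if v = f 1 then 4 else 5 + (Fintype.equivFin V v : ℕ) with hr
    have hrinj : Function.Injective r := by
      intro u v h
      simp only [hr] at h
      split_ifs at h <;>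
        first
          | omega
          | exact (Fintype.equivFin V).injective (Fin.val_injective (by omega))
          | simp_all
    set lt : V → V → Prop := fun u v => r u < r v with hltdef
    have hsto : IsStrictTotalOrder V lt := by
      refine { trichotomous := ?_, irrefl := ?_, trans := ?_ }
      · intro u v
        rcases Nat.lt_trichotomy (r u) (r v) with h | h | h
        exacts [fun h1 _ => absurd h h1, fun _ _ => hrinj h, fun _ h2 => absurd h h2]
      · intro u; exact Nat.lt_irrefl _
      · intro u v w h1 h2; exact Nat.lt_trans h1 h2
    -- values of r on the five special vertices
    have r4 : r (f 4) = 0 := by simp [hr]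
    have r3 : r (f 3) = 1 := by simp [hr, dd 3 4 (by decide)]
    have r2 : r (f 2) = 2 := by simp [hr, dd 2 4 (by decide), dd 2 3 (by decide)]
    have r0 : r (f 0) = 3 := by
      simp [hr, dd 0 4 (by decide), dd 0 3 (by decide), dd 0 2 (by decide)]
    have r1 : r (f 1) = 4 := by
      simp [hr, dd 1 4 (by decide), dd 1 3 (by decide), dd 1 2 (by decide),
        dd 1 0 (by decide)]
    have l43 : lt (f 4) (f 3) := by simp only [hltdef]; omega
    have l32 : lt (f 3) (f 2) := by simp only [hltdef]; omega
    have l20 : lt (f 2) (f 0) := by simp only [hltdef]; omega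
    have l21 : lt (f 2) (f 1) := by simp only [hltdef]; omega
    -- the four arcs
    have hp : IsArcPair G lt (f 3, f 2) :=
      ⟨l32, fun h => ((SimpleGraph.compl_adj G _ _).mp e23).2 h.symm⟩
    have hq1 : IsArcPair G lt (f 4, f 3) :=
      ⟨l43, fun h => ((SimpleGraph.compl_adj G _ _).mp e34).2 h.symm⟩
    have hq2 : IsArcPair G lt (f 2, f 0) :=
      ⟨l20, fun h => ((SimpleGraph.compl_adj G _ _).mp e02).2 h.symm⟩
    have hq3 : IsArcPair G lt (f 2, f 1) :=
      ⟨l21, fun h => ((SimpleGraph.compl_adj G _ _).mp e12).2 h.symm⟩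
    set p : Arc G lt := ⟨(f 3, f 2), hp⟩ with hpdef
    set q1 : Arc G lt := ⟨(f 4, f 3), hq1⟩ with hq1def
    set q2 : Arc G lt := ⟨(f 2, f 0), hq2⟩ with hq2def
    set q3 : Arc G lt := ⟨(f 2, f 1), hq3⟩ with hq3def
    have dpq1 : p ≠ q1 := fun h => dd 3 4 (by decide) (congrArg (fun z => z.1.1) h)
    have dpq2 : p ≠ q2 := fun h => dd 3 2 (by decide) (congrArg (fun z => z.1.1) h)
    have dpq3 : p ≠ q3 := fun h => dd 3 2 (by decide) (congrArg (fun z => z.1.1) h)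
    have d12 : q1 ≠ q2 := fun h => dd 4 2 (by decide) (congrArg (fun z => z.1.1) h)
    have d13 : q1 ≠ q3 := fun h => dd 4 2 (by decide) (congrArg (fun z => z.1.1) h)
    have d23 : q2 ≠ q3 := fun h => dd 0 1 (by decide) (congrArg (fun z => z.1.2) h)
    have a1 : (RGraph G lt).Adj p q1 :=
      ⟨dpq1, Or.inr (Or.inl rfl), fun hc => dd 3 4 (by decide) hc.1⟩
    have a2 : (RGraph G lt).Adj p q2 :=
      ⟨dpq2, Or.inr (Or.inr (Or.inl rfl)), fun hc => dd 3 2 (by decide) hc.1⟩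
    have a3 : (RGraph G lt).Adj p q3 :=
      ⟨dpq3, Or.inr (Or.inr (Or.inl rfl)), fun hc => dd 3 2 (by decide) hc.1⟩
    have n12 : ¬ (RGraph G lt).Adj q1 q2 := by
      rintro ⟨-, hsh, -⟩
      rcases hsh with h | h | h | h
      · exact dd 4 2 (by decide) h
      · exact dd 4 0 (by decide) h
      · exact dd 3 2 (by decide) h
      · exact dd 3 0 (by decide) h
    have n13 : ¬ (RGraph G lt).Adj q1 q3 := by
      rintro ⟨-, hsh, -⟩
      rcases hsh with h | h | h | h
      · exact dd 4 2 (by decide) h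
      · exact dd 4 1 (by decide) h
      · exact dd 3 2 (by decide) h
      · exact dd 3 1 (by decide) h
    have n23 : ¬ (RGraph G lt).Adj q2 q3 := by
      rintro ⟨-, -, hc⟩
      exact hc ⟨rfl, ((SimpleGraph.compl_adj G _ _).mp e01).2⟩
    obtain ⟨K₁, K₂, hdisj, hunion, hc1, hc2⟩ := hql lt hsto p
    have m1 : q1 ∈ K₁ ∪ K₂ := by rw [hunion]; exact a1
    have m2 : q2 ∈ K₁ ∪ K₂ := by rw [hunion]; exact a2
    have m3 : q3 ∈ K₁ ∪ K₂ := by rw [hunion]; exact a3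
    rcases m1 with m1 | m1 <;> rcases m2 with m2 | m2 <;> rcases m3 with m3 | m3 <;>
      first
        | exact n12 (hc1 m1 m2 d12)
        | exact n12 (hc2 m1 m2 d12)
        | exact n13 (hc1 m1 m3 d13)
        | exact n13 (hc2 m1 m3 d13)
        | exact n23 (hc1 m2 m3 d23)
        | exact n23 (hc2 m2 m3 d23)
  · -- no kite → quasi-line for every order
    intro hk lt hsto p
    have htri : ∀ x y : V, lt x y ∨ x = y ∨ lt y x := fun x y => by
      by_contra hn; push_neg at hn; exact hn.2.1 (hsto.trichotomous x y hn.1 hn.2.2)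
    have hirr : ∀ x : V, ¬ lt x x := fun x => hsto.irrefl x
    have htrans : ∀ {x y z : V}, lt x y → lt y z → lt x z :=
      fun h1 h2 => hsto.trans _ _ _ h1 h2
    have hlt_ne : ∀ {u v : V}, lt u v → u ≠ v := fun h he => hirr _ (he ▸ h)
    have hasymlt : ∀ {u v : V}, lt u v → lt v u → False :=
      fun h1 h2 => hirr _ (htrans h1 h2)
    obtain ⟨⟨a, b⟩, hab⟩ := p
    have hltab : lt a b := hab.1
    have hGab : ¬ G.Adj a b := hab.2
    set P : Arc G lt := ⟨(a, b), hab⟩ with hPdef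
    set Ya : V → Prop := fun y => lt a y ∧ ¬G.Adj a y ∧ G.Adj b y with hYadef
    set Yb : V → Prop := fun y => lt b y ∧ ¬G.Adj b y with hYbdef
    set Ra : V → V → Prop := fun y z => Ya y ∧ Ya z ∧ y ≠ z ∧ ¬G.Adj y z with hRadef
    set Rb : V → V → Prop := fun y z => Yb y ∧ Yb z ∧ y ≠ z ∧ ¬G.Adj y z with hRbdef
    have hcmp : ∀ {u v : V}, u ≠ v → ¬G.Adj u v → Gᶜ.Adj u v :=
      fun h1 h2 => (SimpleGraph.compl_adj G _ _).mpr ⟨h1, h2⟩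
    have hnc : ∀ {u v : V}, ¬G.Adj u v → ¬G.Adj v u := fun h h' => h h'.symm
    have hRa_symm : ∀ {u v}, Ra u v → Ra v u :=
      fun h => ⟨h.2.1, h.1, h.2.2.1.symm, hnc h.2.2.2⟩
    have hRb_symm : ∀ {u v}, Rb u v → Rb v u :=
      fun h => ⟨h.2.1, h.1, h.2.2.1.symm, hnc h.2.2.2⟩
    have hRa_irr : ∀ u, ¬ Ra u u := fun u h => h.2.2.1 rfl
    have hRb_irr : ∀ u, ¬ Rb u u := fun u h => h.2.2.1 rfl
    -- kite-freeness consequences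
    have hTa : ∀ x y z, Ra x y → Ra y z → Ra x z → False := by
      rintro x y z ⟨⟨hax, hax2, hbx⟩, ⟨hay, hay2, hby⟩, hxy, hxy2⟩
        ⟨-, ⟨haz, haz2, hbz⟩, hyz, hyz2⟩ ⟨-, -, hxz, hxz2⟩
      exact hk (kite_of_config x y z a b
        (hcmp hxy hxy2) (hcmp hxz hxz2) (hcmp hyz hyz2)
        (hcmp (hlt_ne haz).symm (hnc haz2)) (hcmp (hlt_ne hltab) hGab)
        (hlt_ne hax).symm hbx.ne' (hlt_ne hay).symm hby.ne' hbz.ne')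
    have hPa : ∀ y1 y2 y3 y4, Ra y1 y2 → Ra y2 y3 → Ra y3 y4 →
        y1 ≠ y3 → y1 ≠ y4 → y2 ≠ y4 → False := by
      rintro y1 y2 y3 y4 ⟨⟨ha1, ha12, hb1⟩, ⟨ha2, ha22, hb2⟩, h12, h122⟩
        ⟨-, ⟨ha3, ha32, hb3⟩, h23, h232⟩ ⟨-, ⟨ha4, ha42, hb4⟩, h34, h342⟩ d13 d14 d24
      exact hk (kite_of_config a y1 y2 y3 y4
        (hcmp (hlt_ne ha1) ha12) (hcmp (hlt_ne ha2) ha22) (hcmp h12 h122)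
        (hcmp h23 h232) (hcmp h34 h342)
        (hlt_ne ha3) (hlt_ne ha4) d13 d14 d24)
    have hTb : ∀ x y z, Rb x y → Rb y z → Rb x z → False := by
      rintro x y z ⟨⟨hbx, hbx2⟩, ⟨hby, hby2⟩, hxy, hxy2⟩
        ⟨-, ⟨hbz, hbz2⟩, hyz, hyz2⟩ ⟨-, -, hxz, hxz2⟩
      exact hk (kite_of_config x y z b a
        (hcmp hxy hxy2) (hcmp hxz hxz2) (hcmp hyz hyz2)
        (hcmp (hlt_ne hbz).symm (hnc hbz2)) (hcmp (hlt_ne hltab).symm (hnc hGab))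
        (hlt_ne hbx).symm (hlt_ne (htrans hltab hbx)).symm
        (hlt_ne hby).symm (hlt_ne (htrans hltab hby)).symm
        (hlt_ne (htrans hltab hbz)).symm)
    have hPb : ∀ y1 y2 y3 y4, Rb y1 y2 → Rb y2 y3 → Rb y3 y4 →
        y1 ≠ y3 → y1 ≠ y4 → y2 ≠ y4 → False := by
      rintro y1 y2 y3 y4 ⟨⟨hb1, hb12⟩, ⟨hb2, hb22⟩, h12, h122⟩
        ⟨-, ⟨hb3, hb32⟩, h23, h232⟩ ⟨-, ⟨hb4, hb42⟩, h34, h342⟩ d13 d14 d24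
      exact hk (kite_of_config b y1 y2 y3 y4
        (hcmp (hlt_ne hb1) hb12) (hcmp (hlt_ne hb2) hb22) (hcmp h12 h122)
        (hcmp h23 h232) (hcmp h34 h342)
        (hlt_ne hb3) (hlt_ne hb4) d13 d14 d24)
    -- an edge inside Ya kills everything attached to b except a
    have hKA : ∀ y y' z, Ra y y' → z ≠ b → ¬G.Adj b z → z ≠ a → False := by
      rintro y y' z ⟨⟨hay, hay2, hby⟩, ⟨hay', hay'2, hby'⟩, hyy', hyy'2⟩ hzb hbz hza
      have hzy : y ≠ z := fun h => hbz (h ▸ hby)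
      have hzy' : y' ≠ z := fun h => hbz (h ▸ hby')
      exact hk (kite_of_config y y' a b z
        (hcmp hyy' hyy'2) (hcmp (hlt_ne hay).symm (hnc hay2))
        (hcmp (hlt_ne hay').symm (hnc hay'2))
        (hcmp (hlt_ne hltab) hGab) (hcmp (Ne.symm hzb) hbz)
        hby.ne' hzy (hby'.ne') hzy' (fun h => hza h.symm))
    -- an edge inside Yb kills everything attached to a except b
    have hKB : ∀ y y' z, Rb y y' → z ≠ a → ¬G.Adj a z → z ≠ b → z ≠ y → z ≠ y' → False := by
      rintro y y' z ⟨⟨hby, hby2⟩, ⟨hby', hby'2⟩, hyy', hyy'2⟩ hza haz hzb hzy hzy'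
      exact hk (kite_of_config y y' b a z
        (hcmp hyy' hyy'2) (hcmp (hlt_ne hby).symm (hnc hby2))
        (hcmp (hlt_ne hby').symm (hnc hby'2))
        (hcmp (hlt_ne hltab).symm (hnc hGab)) (hcmp (Ne.symm hza) haz)
        (hlt_ne (htrans hltab hby)).symm (Ne.symm hzy)
        (hlt_ne (htrans hltab hby')).symm (Ne.symm hzy') (Ne.symm hzb))
    -- membership helpers
    have hYaq : ∀ q : Arc G lt, (RGraph G lt).Adj P q → q.1.1 = a → Ya q.1.2 := by
      rintro q ⟨hne, hsh, hc⟩ e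
      refine ⟨?_, ?_, ?_⟩
      · have := q.2.1; rwa [e] at this
      · have := q.2.2; rwa [e] at this
      · by_contra hno
        exact hc ⟨e.symm, hno⟩
    have hYbq : ∀ q : Arc G lt, q.1.1 = b → Yb q.1.2 := by
      intro q e
      exact ⟨by have := q.2.1; rwa [e] at this, by have := q.2.2; rwa [e] at this⟩
    set C : Arc G lt → Prop := fun q =>
      q.1.2 = a ∨ (q.1.1 = a ∧ ¬ S1 Ra lt q.1.2) ∨ (q.1.1 = b ∧ S1 Rb lt q.1.2) with hCdef
    have hclass2 : ∀ q : Arc G lt, (RGraph G lt).Adj P q → ¬ C q →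
        (q.1.2 = b ∧ q.1.1 ≠ a) ∨ (q.1.1 = a ∧ S1 Ra lt q.1.2) ∨
          (q.1.1 = b ∧ ¬ S1 Rb lt q.1.2) := by
      rintro q ⟨hne, hsh, hc⟩ hnC
      rcases hsh with h | h | h | h
      · right; left
        refine ⟨h.symm, ?_⟩
        by_contra hs
        exact hnC (Or.inr (Or.inl ⟨h.symm, hs⟩))
      · exact absurd (Or.inl h.symm) hnC
      · right; right
        refine ⟨h.symm, ?_⟩
        intro hs
        exact hnC (Or.inr (Or.inr ⟨h.symm, hs⟩))
      · left
        refine ⟨h.symm, ?_⟩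
        intro he
        exact hne (Subtype.ext (Prod.ext_iff.mpr ⟨he.symm, h⟩))
    refine ⟨{q | (RGraph G lt).Adj P q ∧ C q}, {q | (RGraph G lt).Adj P q ∧ ¬ C q},
      ?_, ?_, ?_, ?_⟩
    · exact Set.disjoint_left.mpr fun q hq hq' => hq'.2 hq.2
    · ext q
      simp only [Set.mem_union, Set.mem_setOf_eq]
      constructor
      · rintro (⟨h, -⟩ | ⟨h, -⟩) <;> exact h
      · intro h
        by_cases hC : C q
        · exact Or.inl ⟨h, hC⟩
        · exact Or.inr ⟨h, hC⟩
    · -- K₁ is a clique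
      rintro q ⟨hpq, hCq⟩ q' ⟨hpq', hCq'⟩ hne
      rcases hCq with e | ⟨e, hs⟩ | ⟨e, hs⟩ <;> rcases hCq' with e' | ⟨e', hs'⟩ | ⟨e', hs'⟩
      · -- (A1, A1)
        refine ⟨hne, Or.inr (Or.inr (Or.inr (e.trans e'.symm))), fun hc => ?_⟩
        exact hne (Subtype.ext (Prod.ext_iff.mpr ⟨hc.1, e.trans e'.symm⟩))
      · -- (A1, A2)
        refine ⟨hne, Or.inr (Or.inr (Or.inl (e.trans e'.symm))), fun hc => hirr a ?_⟩
        have := q.2.1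
        rwa [hc.1.trans e', e] at this
      · -- (A1, B2) : kite via hKB with z = q.1.1
        exfalso
        obtain ⟨z, hz⟩ := s1_edge hs'
        have h1 := q.2.1
        have h2 := q.2.2
        rw [e] at h1 h2
        refine hKB q'.1.2 z q.1.1 hz (hlt_ne h1) (hnc h2)
          (hlt_ne (htrans h1 hltab)) ?_ ?_
        · exact hlt_ne (htrans (htrans h1 hltab) (hYbq q' e').1)
        · exact hlt_ne (htrans (htrans h1 hltab) hz.2.1.1)
      · -- (A2, A1)
        refine ⟨hne, Or.inr (Or.inl (e.trans e'.symm)), fun hc => hirr a ?_⟩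
        have := q'.2.1
        rwa [hc.1.symm.trans e, e'] at this
      · -- (A2, A2)
        have hyy' : q.1.2 ≠ q'.1.2 := by
          intro he
          exact hne (Subtype.ext (Prod.ext_iff.mpr ⟨e.trans e'.symm, he⟩))
        have hG : G.Adj q.1.2 q'.1.2 := by
          by_contra hng
          exact @two_color_S0 V Ra lt (fun {u v} => hRa_symm) hRa_irr htri _ _
            ⟨hYaq q hpq e, hYaq q' hpq' e', hyy', hng⟩ hs hs'
        exact ⟨hne, Or.inl (e.trans e'.symm), fun hc => hc.2 hG⟩
      · -- (A2, B2) : q gives z = q.1.2 with a-edge, q' side has Rb edge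
        exfalso
        obtain ⟨z, hz⟩ := s1_edge hs'
        have hYaq2 := hYaq q hpq e
        refine hKB q'.1.2 z q.1.2 hz (hlt_ne hYaq2.1).symm hYaq2.2.1
          hYaq2.2.2.ne' ?_ ?_
        · exact fun h => (hYbq q' e').2 (h ▸ hYaq2.2.2)
        · exact fun h => hz.2.1.2 (h ▸ hYaq2.2.2)
      · -- (B2, A1)
        exfalso
        obtain ⟨z, hz⟩ := s1_edge hs
        have h1 := q'.2.1
        have h2 := q'.2.2
        rw [e'] at h1 h2
        refine hKB q.1.2 z q'.1.1 hz (hlt_ne h1) (hnc h2)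
          (hlt_ne (htrans h1 hltab)) ?_ ?_
        · exact hlt_ne (htrans (htrans h1 hltab) (hYbq q e).1)
        · exact hlt_ne (htrans (htrans h1 hltab) hz.2.1.1)
      · -- (B2, A2)
        exfalso
        obtain ⟨z, hz⟩ := s1_edge hs
        have hYaq2 := hYaq q' hpq' e'
        refine hKB q.1.2 z q'.1.2 hz (hlt_ne hYaq2.1).symm hYaq2.2.1
          hYaq2.2.2.ne' ?_ ?_
        · exact fun h => (hYbq q e).2 (h ▸ hYaq2.2.2)
        · exact fun h => hz.2.1.2 (h ▸ hYaq2.2.2)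
      · -- (B2, B2)
        have hyy' : q.1.2 ≠ q'.1.2 := by
          intro he
          exact hne (Subtype.ext (Prod.ext_iff.mpr ⟨e.trans e'.symm, he⟩))
        have hG : G.Adj q.1.2 q'.1.2 := by
          by_contra hng
          exact @two_color_S1 V Rb lt (fun {u v} => hRb_symm) hTb hPb (fun {u v} => hasymlt) _ _
            ⟨hYbq q e, hYbq q' e', hyy', hng⟩ hs hs'
        exact ⟨hne, Or.inl (e.trans e'.symm), fun hc => hc.2 hG⟩
    · -- K₂ is a clique
      rintro q ⟨hpq, hCq⟩ q' ⟨hpq', hCq'⟩ hne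
      rcases hclass2 q hpq hCq with ⟨e, ha1⟩ | ⟨e, hs⟩ | ⟨e, hs⟩ <;>
        rcases hclass2 q' hpq' hCq' with ⟨e', ha1'⟩ | ⟨e', hs'⟩ | ⟨e', hs'⟩
      · -- (B1, B1)
        refine ⟨hne, Or.inr (Or.inr (Or.inr (e.trans e'.symm))), fun hc => ?_⟩
        exact hne (Subtype.ext (Prod.ext_iff.mpr ⟨hc.1, e.trans e'.symm⟩))
      · -- (B1, A2) : hKA with z = q.1.1
        exfalso
        obtain ⟨z, hz⟩ := s1_edge hs'
        have h1 := q.2.1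
        have h2 := q.2.2
        rw [e] at h1 h2
        exact hKA q'.1.2 z q.1.1 hz (hlt_ne h1) (hnc h2) ha1
      · -- (B1, B2)
        refine ⟨hne, Or.inr (Or.inr (Or.inl (e.trans e'.symm))), fun hc => hirr b ?_⟩
        have := q.2.1
        rwa [hc.1.trans e', e] at this
      · -- (A2, B1)
        exfalso
        obtain ⟨z, hz⟩ := s1_edge hs
        have h1 := q'.2.1
        have h2 := q'.2.2
        rw [e'] at h1 h2
        exact hKA q.1.2 z q'.1.1 hz (hlt_ne h1) (hnc h2) ha1'
      · -- (A2, A2)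
        have hyy' : q.1.2 ≠ q'.1.2 := by
          intro he
          exact hne (Subtype.ext (Prod.ext_iff.mpr ⟨e.trans e'.symm, he⟩))
        have hG : G.Adj q.1.2 q'.1.2 := by
          by_contra hng
          exact @two_color_S1 V Ra lt (fun {u v} => hRa_symm) hTa hPa (fun {u v} => hasymlt) _ _
            ⟨hYaq q hpq e, hYaq q' hpq' e', hyy', hng⟩ hs hs'
        exact ⟨hne, Or.inl (e.trans e'.symm), fun hc => hc.2 hG⟩
      · -- (A2, B2) : hKA with z = q'.1.2
        exfalso
        obtain ⟨z, hz⟩ := s1_edge hs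
        have hb' := hYbq q' e'
        exact hKA q.1.2 z q'.1.2 hz (hlt_ne hb'.1).symm hb'.2
          (hlt_ne (htrans hltab hb'.1)).symm
      · -- (B2, B1)
        refine ⟨hne, Or.inr (Or.inl (e.trans e'.symm)), fun hc => hirr b ?_⟩
        have := q'.2.1
        rwa [hc.1.symm.trans e, e'] at this
      · -- (B2, A2)
        exfalso
        obtain ⟨z, hz⟩ := s1_edge hs'
        have hb' := hYbq q e
        exact hKA q'.1.2 z q.1.2 hz (hlt_ne hb'.1).symm hb'.2
          (hlt_ne (htrans hltab hb'.1)).symm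
      · -- (B2, B2)
        have hyy' : q.1.2 ≠ q'.1.2 := by
          intro he
          exact hne (Subtype.ext (Prod.ext_iff.mpr ⟨e.trans e'.symm, he⟩))
        have hG : G.Adj q.1.2 q'.1.2 := by
          by_contra hng
          exact @two_color_S0 V Rb lt (fun {u v} => hRb_symm) hRb_irr htri _ _
            ⟨hYbq q e, hYbq q' e', hyy', hng⟩ hs hs'
        exact ⟨hne, Or.inl (e.trans e'.symm), fun hc => hc.2 hG⟩
end
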